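/- Let V and Q be finite dimensional real inner product spaces, a : V × V → ℝ a coercive, bounded bilinear form, and b : V × Q → ℝ a bilinear form satisfying the inf-sup condition: there exists β > 0 with sup_{v ≠ 0} b(v,q)/‖v‖ ≥ β‖q‖ for all q ∈ Q. Then for every f ∈ V* and g ∈ Q* the saddle point problem a(u,v) + b(v,p) = f(v) for all v ∈ V, b(u,q) = g(q) for all q ∈ Q, has a unique solution (u,p) ∈ V × Q. -/

import Mathlib

/-- Finite dimensional saddle point (Babuška–Brezzi) theory: with `a` coercive and
bounded and `b` satisfying the inf-sup condition, the saddle point problem has a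
unique solution `(u, p)` for all right-hand sides `f ∈ V*`, `g ∈ Q*`. -/
theorem saddle_point_problem_unique_solution
    (V Q : Type*)
    [NormedAddCommGroup V] [InnerProductSpace ℝ V] [FiniteDimensional ℝ V]
    [NormedAddCommGroup Q] [InnerProductSpace ℝ Q] [FiniteDimensional ℝ Q]
    (a : V →ₗ[ℝ] V →ₗ[ℝ] ℝ) (b : V →ₗ[ℝ] Q →ₗ[ℝ] ℝ)
    (α : ℝ) (hα : 0 < α) (hcoer : ∀ v : V, α * ‖v‖ ^ 2 ≤ a v v)
    (Ma : ℝ) (hbdd : ∀ u v : V, |a u v| ≤ Ma * ‖u‖ * ‖v‖)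
    (β : ℝ) (hβ : 0 < β)
    (hinfsup : ∀ q : Q, β * ‖q‖ ≤ ⨆ v : {v : V // v ≠ 0}, b v q / ‖(v : V)‖)
    (f : V →ₗ[ℝ] ℝ) (g : Q →ₗ[ℝ] ℝ) :
    ∃! up : V × Q,
      (∀ v : V, a up.1 v + b v up.2 = f v) ∧ ∀ q : Q, b up.1 q = g q := by
  classical
  -- the linear map (u,p) ↦ (v ↦ a u v + b v p, q ↦ b u q)
  set Φ : (V × Q) →ₗ[ℝ] (V →ₗ[ℝ] ℝ) × (Q →ₗ[ℝ] ℝ) :=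
    LinearMap.prod
      (a.comp (LinearMap.fst ℝ V Q) + b.flip.comp (LinearMap.snd ℝ V Q))
      (b.comp (LinearMap.fst ℝ V Q)) with hΦ
  have hΦapp : ∀ up : V × Q, ∀ v : V, (Φ up).1 v = a up.1 v + b v up.2 := by
    intro up v; simp [hΦ]
  have hΦapp2 : ∀ up : V × Q, ∀ q : Q, (Φ up).2 q = b up.1 q := by
    intro up q; simp [hΦ]
  -- injectivity
  have hinj : Function.Injective Φ := by
    rw [← LinearMap.ker_eq_bot, LinearMap.ker_eq_bot']
    rintro ⟨u, p⟩ h0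
    have h1 : ∀ v : V, a u v + b v p = 0 := by
      intro v
      have := hΦapp (u, p) v
      rw [h0] at this
      simpa using this.symm
    have h2 : ∀ q : Q, b u q = 0 := by
      intro q
      have := hΦapp2 (u, p) q
      rw [h0] at this
      simpa using this.symm
    -- u = 0
    have hu : u = 0 := by
      have hauu : a u u = 0 := by
        have h := h1 u
        have := h2 p
        linarith
      have hcu := hcoer u
      rw [hauu] at hcu
      have hsq : ‖u‖ ^ 2 ≤ 0 := by
        have h' : α * ‖u‖ ^ 2 ≤ α * 0 := by simpa using hcu
        exact (mul_le_mul_iff_right₀ hα).mp h'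
      have hsq0 : ‖u‖ ^ 2 = 0 := le_antisymm hsq (sq_nonneg _)
      have : ‖u‖ = 0 := by
        exact pow_eq_zero_iff (two_ne_zero) |>.mp hsq0
      exact norm_eq_zero.mp this
    -- p = 0
    have hbz : ∀ v : V, b v p = 0 := by
      intro v
      have h := h1 v
      rw [hu] at h
      simpa using h
    have hsup : (⨆ v : {v : V // v ≠ 0}, b (v : V) p / ‖(v : V)‖) = 0 := by
      have hfn : (fun v : {v : V // v ≠ 0} => b (v : V) p / ‖(v : V)‖) =
          fun _ => (0 : ℝ) := by
        funext v; rw [hbz]; simp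
      rw [hfn]
      rcases isEmpty_or_nonempty {v : V // v ≠ 0} with h | h
      · exact Real.iSup_of_isEmpty _
      · exact ciSup_const
    have hp0 : β * ‖p‖ ≤ 0 := by
      have := hinfsup p
      rw [hsup] at this
      exact this
    have hple : ‖p‖ ≤ 0 := by
      have h' : β * ‖p‖ ≤ β * 0 := by simpa using hp0
      exact (mul_le_mul_iff_right₀ hβ).mp h'
    have : ‖p‖ = 0 := le_antisymm hple (norm_nonneg p)
    have hp : p = 0 := norm_eq_zero.mp this
    simp [hu, hp, Prod.ext_iff]
  -- surjectivity via dimension count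
  have hdim : Module.finrank ℝ (V × Q) =
      Module.finrank ℝ ((V →ₗ[ℝ] ℝ) × (Q →ₗ[ℝ] ℝ)) := by
    simp [Module.finrank_prod, Module.finrank_linearMap]
  have hsurj : Function.Surjective Φ :=
    (LinearMap.injective_iff_surjective_of_finrank_eq_finrank hdim).mp hinj
  obtain ⟨up, hup⟩ := hsurj (f, g)
  refine ⟨up, ⟨?_, ?_⟩, ?_⟩
  · intro v
    rw [← hΦapp up v, hup]
  · intro q
    rw [← hΦapp2 up q, hup]
  · rintro y ⟨hy1, hy2⟩
    apply hinj
    rw [hup]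
    refine Prod.ext ?_ ?_
    · ext v; rw [hΦapp y v, hy1 v]
    · ext q; rw [hΦapp2 y q, hy2 q]
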